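/- Let F be a totally imaginary field containing a maximal CM subfield F₁ with maximal totally real subfield F₀, F₁ = F₀(√D) with D ∈ F₀ totally negative. Then, as elements of ℂ^×/ℚ^×, |δ_{F/ℚ}|^{1/2} = i^{d_F/2} · Δ_F · (N_{F₁/ℚ}(δ_{F/F₁}))^{1/2}, where Δ_F = (√(N_{F₀/ℚ}(D)))^{[F:F₁]} and N_{F₁/ℚ}(δ_{F/F₁}) > 0. -/

import Mathlib

open scoped ComplexConjugate
open Module Matrix Polynomial
open scoped Kronecker

noncomputable section CMAux

noncomputable def Complex.conjRatAlgHom : ℂ →ₐ[ℚ] ℂ :=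
  AlgHom.mk' (starRingEnd ℂ) (fun c x => by simp [Rat.smul_def, _root_.map_mul, map_ratCast])

lemma CM_aux.norm_pos_of_ti {K : Type*} [Field K] [NumberField K]
    (hti : ∀ σ : K →+* ℂ, (starRingEnd ℂ).comp σ ≠ σ) {x : K} (hx : x ≠ 0) :
    0 < Algebra.norm ℚ x := by
  have h1 : (algebraMap ℚ ℂ) (Algebra.norm ℚ x) = ∏ σ : K →ₐ[ℚ] ℂ, σ x :=
    Algebra.norm_eq_prod_embeddings ℚ ℂ x
  have hne : ∀ σ : K →ₐ[ℚ] ℂ, σ x ≠ 0 := fun σ h => hx ((map_eq_zero σ).mp h)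
  set g : (K →ₐ[ℚ] ℂ) → (K →ₐ[ℚ] ℂ) := fun σ => Complex.conjRatAlgHom.comp σ with hg
  have hgapp : ∀ (σ : K →ₐ[ℚ] ℂ) y, g σ y = conj (σ y) := fun σ y => rfl
  have hprod1 : ∏ σ : K →ₐ[ℚ] ℂ, ((‖σ x‖ : ℂ)⁻¹ * σ x) = 1 := by
    apply Finset.prod_ninvolution g
    · intro σ
      have h0 : (‖σ x‖ : ℂ) ≠ 0 := by simpa using (norm_ne_zero_iff.2 (hne σ))
      rw [hgapp, show ‖conj (σ x)‖ = ‖σ x‖ from RCLike.norm_conj _]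
      have h2 : σ x * conj (σ x) = (‖σ x‖ : ℂ) * (‖σ x‖ : ℂ) := by
        rw [Complex.mul_conj']
        push_cast
        ring
      rw [show (‖σ x‖ : ℂ)⁻¹ * σ x * ((‖σ x‖ : ℂ)⁻¹ * conj (σ x)) =
        (σ x * conj (σ x)) * ((‖σ x‖ : ℂ)⁻¹ * (‖σ x‖ : ℂ)⁻¹) from by ring, h2]
      rw [mul_mul_mul_comm, mul_inv_cancel₀ h0, one_mul]
    · intro σ _ hgσ
      apply hti σ.toRingHom
      ext y
      exact congrArg (fun (f : K →ₐ[ℚ] ℂ) => f y) hgσ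
    · intro σ; exact Finset.mem_univ _
    · intro σ; ext y; simp [hgapp]
  have h3 : (algebraMap ℚ ℂ) (Algebra.norm ℚ x) = ((∏ σ : K →ₐ[ℚ] ℂ, ‖σ x‖ : ℝ) : ℂ) := by
    rw [h1]
    push_cast
    calc ∏ σ : K →ₐ[ℚ] ℂ, σ x
        = ∏ σ : K →ₐ[ℚ] ℂ, ((‖σ x‖ : ℂ) * ((‖σ x‖ : ℂ)⁻¹ * σ x)) := by
          apply Finset.prod_congr rfl
          intro σ _
          have h0 : (‖σ x‖ : ℂ) ≠ 0 := by simpa using (norm_ne_zero_iff.2 (hne σ))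
          rw [← mul_assoc, mul_inv_cancel₀ h0, one_mul]
      _ = (∏ σ : K →ₐ[ℚ] ℂ, (‖σ x‖ : ℂ)) * ∏ σ : K →ₐ[ℚ] ℂ, ((‖σ x‖ : ℂ)⁻¹ * σ x) := by
          rw [Finset.prod_mul_distrib]
      _ = ∏ σ : K →ₐ[ℚ] ℂ, (‖σ x‖ : ℂ) := by rw [hprod1, mul_one]
  have hpos : (0 : ℝ) < ∏ σ : K →ₐ[ℚ] ℂ, ‖σ x‖ :=
    Finset.prod_pos (fun σ _ => norm_pos_iff.2 (hne σ))
  have h4 : ((Algebra.norm ℚ x : ℝ) : ℂ) = ((∏ σ : K →ₐ[ℚ] ℂ, ‖σ x‖ : ℝ) : ℂ) := by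
    rw [← h3]
    simp [Complex.ofReal_ratCast]
  have h5 : (Algebra.norm ℚ x : ℝ) = ∏ σ : K →ₐ[ℚ] ℂ, ‖σ x‖ := by
    exact_mod_cast h4
  have := h5 ▸ hpos
  exact_mod_cast this

lemma CM_aux.norm_sign_of_tr {K : Type*} [Field K] [NumberField K]
    (hreal : ∀ σ : K →+* ℂ, (starRingEnd ℂ).comp σ = σ)
    {x : K} (hx : ∀ σ : K →+* ℝ, σ x < 0) :
    0 < (-1 : ℚ) ^ (Module.finrank ℚ K) * Algebra.norm ℚ x := by
  have h1 : (algebraMap ℚ ℂ) (Algebra.norm ℚ x) = ∏ σ : K →ₐ[ℚ] ℂ, σ x :=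
    Algebra.norm_eq_prod_embeddings ℚ ℂ x
  have hre : ∀ σ : K →ₐ[ℚ] ℂ, NumberField.ComplexEmbedding.IsReal σ.toRingHom := by
    intro σ
    rw [NumberField.ComplexEmbedding.isReal_iff]
    exact hreal σ.toRingHom
  have h2 : ∀ σ : K →ₐ[ℚ] ℂ, σ x = (((hre σ).embedding x : ℝ) : ℂ) := by
    intro σ
    exact ((hre σ).coe_embedding_apply x).symm
  have h3 : ((Algebra.norm ℚ x : ℝ) : ℂ) = ((∏ σ : K →ₐ[ℚ] ℂ, (hre σ).embedding x : ℝ) : ℂ) := by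
    rw [Complex.ofReal_ratCast, ← eq_ratCast (algebraMap ℚ ℂ), h1]
    push_cast
    exact Finset.prod_congr rfl fun σ _ => h2 σ
  have h4 : (Algebra.norm ℚ x : ℝ) = ∏ σ : K →ₐ[ℚ] ℂ, (hre σ).embedding x := by
    exact_mod_cast h3
  have hcard : Fintype.card (K →ₐ[ℚ] ℂ) = Module.finrank ℚ K := AlgHom.card ℚ K ℂ
  have h5 : (0 : ℝ) < ∏ σ : K →ₐ[ℚ] ℂ, (-((hre σ).embedding x)) :=
    Finset.prod_pos fun σ _ => by linarith [hx ((hre σ).embedding)]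
  have h6 : ∏ σ : K →ₐ[ℚ] ℂ, (-((hre σ).embedding x)) =
      (-1 : ℝ) ^ (Module.finrank ℚ K) * ∏ σ : K →ₐ[ℚ] ℂ, (hre σ).embedding x := by
    rw [← hcard]
    calc ∏ σ : K →ₐ[ℚ] ℂ, (-((hre σ).embedding x))
        = ∏ σ : K →ₐ[ℚ] ℂ, ((-1 : ℝ) * ((hre σ).embedding x)) := by
          exact Finset.prod_congr rfl fun σ _ => by ring
      _ = (∏ _σ : K →ₐ[ℚ] ℂ, (-1 : ℝ)) * ∏ σ : K →ₐ[ℚ] ℂ, (hre σ).embedding x :=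
          Finset.prod_mul_distrib
      _ = (-1 : ℝ) ^ (Fintype.card (K →ₐ[ℚ] ℂ)) * ∏ σ : K →ₐ[ℚ] ℂ, (hre σ).embedding x := by
          rw [Finset.prod_const, Finset.card_univ]
  rw [h6, ← h4] at h5
  exact_mod_cast h5
lemma CM_aux.sigma_discr {K L : Type*} [Field K] [Field L] [Algebra K L]
    [NumberField K] [NumberField L]
    {ι : Type*} [Fintype ι] [DecidableEq ι] (b : Basis ι K L) (σ : K →ₐ[ℚ] ℂ) :
    ∃ eσ : ι ≃ {τ : L →ₐ[ℚ] ℂ // τ.comp (IsScalarTower.toAlgHom ℚ K L) = σ},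
      σ (Algebra.discr K b) =
        (Matrix.det (Matrix.of fun i i' => ((eσ i' : {τ : L →ₐ[ℚ] ℂ //
          τ.comp (IsScalarTower.toAlgHom ℚ K L) = σ}) : L →ₐ[ℚ] ℂ) (b i))) ^ 2 := by
  letI : Algebra K ℂ := σ.toRingHom.toAlgebra
  have halg : ∀ x : K, algebraMap K ℂ x = σ x := fun x => rfl
  let E1 : (L →ₐ[K] ℂ) ≃ {τ : L →ₐ[ℚ] ℂ // τ.comp (IsScalarTower.toAlgHom ℚ K L) = σ} :=
    { toFun := fun τ' => ⟨τ'.restrictScalars ℚ, by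
        ext x
        exact τ'.commutes x⟩
      invFun := fun t =>
        { toRingHom := (t : L →ₐ[ℚ] ℂ).toRingHom
          commutes' := fun x => by
            have := congrArg (fun (f : K →ₐ[ℚ] ℂ) => f x) t.2
            exact this }
      left_inv := fun τ' => by ext x; rfl
      right_inv := fun t => by ext x; rfl }
  have card_eq : Fintype.card ι = Fintype.card (L →ₐ[K] ℂ) := by
    rw [AlgHom.card K L ℂ, finrank_eq_card_basis b]
  let e0 : ι ≃ (L →ₐ[K] ℂ) := Fintype.equivOfCardEq card_eq
  refine ⟨e0.trans E1, ?_⟩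
  have h := Algebra.discr_eq_det_embeddingsMatrixReindex_pow_two K ℂ (⇑b) e0
  rw [halg] at h
  rw [h]
  congr 1

lemma CM_aux.discr_tower {K L : Type*} [Field K] [Field L] [Algebra K L]
    [NumberField K] [NumberField L]
    {ι κ : Type*} [Fintype ι] [Fintype κ] [DecidableEq ι] [DecidableEq κ]
    (c : Basis κ ℚ K) (b : Basis ι K L) :
    Algebra.discr ℚ (c.smulTower b) =
      Algebra.discr ℚ c ^ (Fintype.card ι) * Algebra.norm ℚ (Algebra.discr K b) := by
  classical
  apply (algebraMap ℚ ℂ).injective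
  set res : (L →ₐ[ℚ] ℂ) → (K →ₐ[ℚ] ℂ) := fun τ => τ.comp (IsScalarTower.toAlgHom ℚ K L)
    with hresdef
  choose ee hee using fun σ : K →ₐ[ℚ] ℂ => CM_aux.sigma_discr b σ
  let EP : ((K →ₐ[ℚ] ℂ) × ι) ≃ (L →ₐ[ℚ] ℂ) :=
    (Equiv.sigmaEquivProd (K →ₐ[ℚ] ℂ) ι).symm.trans
      ((Equiv.sigmaCongrRight (fun σ => ee σ)).trans (Equiv.sigmaFiberEquiv res))
  have hEP : ∀ σ i, EP (σ, i) = ((ee σ i : {τ : L →ₐ[ℚ] ℂ // res τ = σ}) : L →ₐ[ℚ] ℂ) :=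
    fun _ _ => rfl
  have hres : ∀ σ i, (EP (σ, i)).comp (IsScalarTower.toAlgHom ℚ K L) = σ :=
    fun σ i => (ee σ i).2
  have cardκ : Fintype.card κ = Fintype.card (K →ₐ[ℚ] ℂ) := by
    rw [AlgHom.card ℚ K ℂ, finrank_eq_card_basis c]
  let e0 : κ ≃ (K →ₐ[ℚ] ℂ) := Fintype.equivOfCardEq cardκ
  let e : (κ × ι) ≃ (L →ₐ[ℚ] ℂ) := (Equiv.prodCongr e0 (Equiv.refl ι)).trans EP
  have main := Algebra.discr_eq_det_embeddingsMatrixReindex_pow_two ℚ ℂ (⇑(c.smulTower b)) e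
  set C : Matrix κ κ ℂ := Matrix.of fun k k' => (e0 k') (c k) with hC
  set Bm : κ → Matrix ι ι ℂ := fun k => Matrix.of fun i2 i' => (EP (e0 k, i')) (b i2) with hBm
  have hM : Algebra.embeddingsMatrixReindex ℚ ℂ (⇑(c.smulTower b)) e =
      (C ⊗ₖ (1 : Matrix ι ι ℂ)) *
        ((Matrix.blockDiagonal Bm).submatrix (Equiv.prodComm κ ι) (Equiv.prodComm κ ι)) := by
    ext ⟨k, i⟩ ⟨k', i'⟩
    rw [Matrix.mul_apply]
    rw [Finset.sum_eq_single (k', i)]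
    · have h1 : (C ⊗ₖ (1 : Matrix ι ι ℂ)) (k, i) (k', i) = C k k' := by
        simp [Matrix.kroneckerMap_apply]
      have h2 : ((Matrix.blockDiagonal Bm).submatrix (Equiv.prodComm κ ι)
          (Equiv.prodComm κ ι)) (k', i) (k', i') = Bm k' i i' := by
        simp [Matrix.submatrix_apply, Matrix.blockDiagonal_apply]
      rw [h1, h2]
      -- LHS entry
      have h3 : Algebra.embeddingsMatrixReindex ℚ ℂ (⇑(c.smulTower b)) e (k, i) (k', i') =
          (EP (e0 k', i')) ((c.smulTower b) (k, i)) := rfl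
      rw [h3, Basis.smulTower_apply]
      have h4 : (c k • b i : L) = algebraMap K L (c k) * b i := Algebra.smul_def _ _
      rw [h4, _root_.map_mul]
      have h5 : (EP (e0 k', i')) (algebraMap K L (c k)) = (e0 k') (c k) := by
        have := congrArg (fun (f : K →ₐ[ℚ] ℂ) => f (c k)) (hres (e0 k') i')
        exact this
      rw [h5]
      rfl
    · rintro ⟨k2, i2⟩ - hne
      by_cases hk : k2 = k'
      · subst hk
        have : i2 ≠ i := fun h => hne (by rw [h])
        have h1 : (C ⊗ₖ (1 : Matrix ι ι ℂ)) (k, i) (k2, i2) = 0 := by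
          simp [Matrix.kroneckerMap_apply, Matrix.one_apply, this.symm]
        rw [h1, zero_mul]
      · have h2 : ((Matrix.blockDiagonal Bm).submatrix (Equiv.prodComm κ ι)
            (Equiv.prodComm κ ι)) (k2, i2) (k', i') = 0 := by
          simp [Matrix.submatrix_apply, Matrix.blockDiagonal_apply, hk]
        rw [h2, mul_zero]
    · intro h
      exact absurd (Finset.mem_univ _) h
  rw [hM] at main
  rw [Matrix.det_mul, Matrix.det_kronecker, Matrix.det_submatrix_equiv_self,
    Matrix.det_blockDiagonal] at main
  have hCdet : C = Algebra.embeddingsMatrixReindex ℚ ℂ (⇑c) e0 := rfl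
  have hBdet : ∀ k : κ, (Bm k).det ^ 2 = (e0 k) (Algebra.discr K b) := by
    intro k
    rw [hee (e0 k)]
    rfl
  rw [_root_.map_mul, map_pow]
  rw [main]
  have hnorm : algebraMap ℚ ℂ (Algebra.norm ℚ (Algebra.discr K b)) =
      ∏ σ : K →ₐ[ℚ] ℂ, σ (Algebra.discr K b) :=
    Algebra.norm_eq_prod_embeddings ℚ ℂ _
  rw [hnorm]
  rw [Algebra.discr_eq_det_embeddingsMatrixReindex_pow_two ℚ ℂ (⇑c) e0]
  rw [← hCdet]
  rw [mul_pow, Matrix.det_one, one_pow, mul_one]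
  rw [← pow_mul, mul_comm (Fintype.card ι) 2, pow_mul]
  congr 1
  rw [← Finset.prod_pow]
  rw [Fintype.prod_equiv e0 _ (fun σ => σ (Algebra.discr K b)) (fun k => hBdet k)]
lemma CM_aux.discr_quad {F₀ F₁ : Type*} [Field F₀] [Field F₁] [NumberField F₀] [NumberField F₁]
    [Algebra F₀ F₁]
    (D : F₀) (d₁ : F₁) (hd₁ : d₁ ^ 2 = algebraMap F₀ F₁ D)
    (hgen : Algebra.adjoin F₀ ({d₁} : Set F₁) = ⊤)
    (hdeg : Module.finrank F₀ F₁ = 2) :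
    ∃ (ib : Basis (Fin 2) F₀ F₁), Algebra.discr F₀ ib = 4 * D := by
  have hint : IsIntegral F₀ d₁ := IsIntegral.of_finite F₀ d₁
  let pb : PowerBasis F₀ F₁ := (Algebra.adjoin.powerBasis hint).map <|
    (Subalgebra.equivOfEq _ _ hgen).trans Subalgebra.topEquiv
  have hgen' : pb.gen = d₁ := rfl
  have hdim : pb.dim = 2 := by
    have := pb.finrank
    rw [hdeg] at this
    exact this.symm
  -- minimal polynomial
  have haev : (aeval d₁) (X ^ 2 - C D) = 0 := by
    rw [map_sub, map_pow, aeval_X, aeval_C, hd₁, sub_self]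
  have hmono : (X ^ 2 - C D : F₀[X]).Monic := monic_X_pow_sub_C D (by norm_num)
  have hnd : (X ^ 2 - C D : F₀[X]).natDegree = 2 := by
    rw [natDegree_X_pow_sub_C]
  have hmp : minpoly F₀ d₁ = X ^ 2 - C D := by
    have hdvd : minpoly F₀ d₁ ∣ X ^ 2 - C D := minpoly.dvd F₀ d₁ haev
    have hndm : (minpoly F₀ d₁).natDegree = 2 := by
      have := pb.natDegree_minpoly
      rw [hgen', hdim] at this
      exact this
    exact (eq_of_monic_of_dvd_of_natDegree_le (minpoly.monic hint) hmono hdvd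
      (by rw [hnd, hndm])).symm
  -- norm of gen
  have hnormgen : Algebra.norm F₀ d₁ = -D := by
    have := Algebra.PowerBasis.norm_gen_eq_coeff_zero_minpoly pb
    rw [hgen', hdim, hmp] at this
    simpa using this
  -- discriminant
  have hsep : Algebra.IsSeparable F₀ F₁ := inferInstance
  have hdiscr := Algebra.discr_powerBasis_eq_norm (pb := pb)
  rw [hgen', hmp] at hdiscr
  have hderiv : derivative (X ^ 2 - C D : F₀[X]) = C 2 * X := by
    rw [derivative_sub, derivative_C, derivative_X_pow]
    simp
  rw [hderiv] at hdiscr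
  have haev2 : (aeval d₁) (C 2 * X : F₀[X]) = algebraMap F₀ F₁ 2 * d₁ := by
    rw [_root_.map_mul, aeval_C, aeval_X]
  rw [haev2] at hdiscr
  have hnorm2 : Algebra.norm F₀ (algebraMap F₀ F₁ 2 * d₁) = -(4 * D) := by
    rw [_root_.map_mul, Algebra.norm_algebraMap, hdeg, hnormgen]
    ring
  rw [hnorm2] at hdiscr
  have hn2 : Module.finrank F₀ F₁ = 2 := hdeg
  refine ⟨pb.basis.reindex (finCongr hdim), ?_⟩
  rw [Basis.coe_reindex, Algebra.discr_reindex, hdiscr, hn2]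
  norm_num

lemma CM_aux.discr_basis_change {L : Type*} [Field L] [NumberField L] {ι : Type*} [Fintype ι]
    [DecidableEq ι] (b b' : Basis ι ℚ L) :
    ∃ t : ℚ, t ≠ 0 ∧ Algebra.discr ℚ b' = t ^ 2 * Algebra.discr ℚ b := by
  refine ⟨(b.toMatrix b').det, ?_, ?_⟩
  · intro h
    have h1 := Basis.toMatrix_mul_toMatrix_flip b b'
    have h2 := congrArg Matrix.det h1
    rw [Matrix.det_mul, h, zero_mul, Matrix.det_one] at h2
    exact zero_ne_one h2
  · have hb' : ⇑b' = ⇑b ᵥ* ((b.toMatrix b').map (algebraMap ℚ L)) := by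
      funext j
      rw [Matrix.vecMul, dotProduct]
      rw [← Basis.sum_toMatrix_smul_self b (v := ⇑b') (j := j)]
      apply Finset.sum_congr rfl
      intro i _
      rw [Matrix.map_apply, Algebra.smul_def]
      ring
    have h3 := Algebra.discr_of_matrix_vecMul (⇑b) (b.toMatrix ⇑b')
    rw [← hb'] at h3
    exact h3

lemma CM_aux.sqrt_pow {x : ℝ} (hx : 0 ≤ x) (m : ℕ) :
    Real.sqrt (x ^ m) = (Real.sqrt x) ^ m := by
  rw [Real.sqrt_eq_rpow, Real.sqrt_eq_rpow, ← Real.rpow_natCast x m, ← Real.rpow_mul hx,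
    ← Real.rpow_natCast (x ^ ((1:ℝ)/2)) m, ← Real.rpow_mul hx]
  ring_nf

lemma CM_aux.cpow_half_pos {r : ℝ} (h : 0 ≤ r) :
    (r : ℂ) ^ ((1 : ℂ)/2) = ((Real.sqrt r : ℝ) : ℂ) := by
  rw [show ((1:ℂ)/2) = (((1:ℝ)/2 : ℝ) : ℂ) by norm_num, ← Complex.ofReal_cpow h,
    ← Real.sqrt_eq_rpow]

lemma CM_aux.cpow_half_neg {r : ℝ} (h : r < 0) :
    (r : ℂ) ^ ((1 : ℂ)/2) = Complex.I * ((Real.sqrt (-r) : ℝ) : ℂ) := by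
  rw [Complex.ofReal_cpow_of_nonpos h.le]
  rw [show (-(r:ℂ)) = ((-r : ℝ) : ℂ) by push_cast; ring]
  rw [CM_aux.cpow_half_pos (by linarith)]
  have hexp : (↑Real.pi * Complex.I * ((1:ℂ)/2)) = ((Real.pi/2 : ℝ) : ℂ) * Complex.I := by
    push_cast
    ring
  rw [hexp, Complex.exp_mul_I, ← Complex.ofReal_cos, ← Complex.ofReal_sin,
    Real.cos_pi_div_two, Real.sin_pi_div_two]
  push_cast
  ring

end CMAux


/-- A subfield `K` of `F` is CM iff it is totally imaginary and complex
conjugation commutes with all automorphisms of `ℂ` on its image. -/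
def IsCMSubfield (F : Type*) [Field F] (K : Subfield F) : Prop :=
  (∀ σ : ↥K →+* ℂ, (starRingEnd ℂ).comp σ ≠ σ) ∧
  (∀ (σ : ↥K →+* ℂ) (γ : ℂ ≃+* ℂ),
    ((γ : ℂ →+* ℂ)).comp ((starRingEnd ℂ).comp σ) =
      (starRingEnd ℂ).comp (((γ : ℂ →+* ℂ)).comp σ))

/-- Let `F` be a totally imaginary field containing a maximal CM subfield
`F₁ = F₀(√D)`, `F₀` totally real and `D ∈ F₀` totally negative.  Then
`N_{F₁/ℚ}(δ_{F/F₁}) > 0` and, as elements of `ℂ^×/ℚ^×`,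
`|δ_{F/ℚ}|^{1/2} = i^{d_F/2} · Δ_F · (N_{F₁/ℚ}(δ_{F/F₁}))^{1/2}`, where
`Δ_F = (√(N_{F₀/ℚ}(D)))^{[F:F₁]}` and `δ_{F/F₁}` is computed (mod squares) as
the discriminant of any `F₁`-basis of `F`. -/
theorem discr_sqrt_eq_of_totallyImaginary
    (F₀ F₁ F : Type*) [Field F₀] [NumberField F₀] [Field F₁] [NumberField F₁]
    [Field F] [NumberField F]
    [Algebra F₀ F₁] [Algebra F₁ F] [Algebra F₀ F] [IsScalarTower F₀ F₁ F]
    (hF₀real : ∀ σ : F₀ →+* ℂ, (starRingEnd ℂ).comp σ = σ)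
    (hF₁ti : ∀ σ : F₁ →+* ℂ, (starRingEnd ℂ).comp σ ≠ σ)
    (hFti : ∀ τ : F →+* ℂ, (starRingEnd ℂ).comp τ ≠ τ)
    (D : F₀) (hD : ∀ σ : F₀ →+* ℝ, σ D < 0)
    (d₁ : F₁) (hd₁ : d₁ ^ 2 = algebraMap F₀ F₁ D)
    (hgen : Algebra.adjoin F₀ ({d₁} : Set F₁) = ⊤)
    (hdeg : Module.finrank F₀ F₁ = 2)
    -- `F₁` is a *maximal* CM subfield of `F`:
    (hmax : ∀ K : Subfield F, IsCMSubfield F K →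
      K ≤ (algebraMap F₁ F).fieldRange)
    (ι : Type*) [Fintype ι] [DecidableEq ι] (b : Basis ι F₁ F) :
    0 < Algebra.norm ℚ (Algebra.discr F₁ b) ∧
    ∃ q : ℚ, q ≠ 0 ∧
      ((Real.sqrt |(NumberField.discr F : ℝ)| : ℝ) : ℂ) =
        (q : ℂ) * Complex.I ^ (Module.finrank ℚ F / 2) *
          (((Algebra.norm ℚ D : ℚ) : ℂ) ^ ((1 : ℂ) / 2)) ^ (Module.finrank F₁ F) *
          (Real.sqrt ((Algebra.norm ℚ (Algebra.discr F₁ b) : ℝ)) : ℂ) := by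
  classical
  have hδ0 : Algebra.discr F₁ ⇑b ≠ 0 := Algebra.discr_not_zero_of_basis F₁ b
  have hNδpos : 0 < Algebra.norm ℚ (Algebra.discr F₁ ⇑b) := CM_aux.norm_pos_of_ti hF₁ti hδ0
  refine ⟨hNδpos, ?_⟩
  set Nδ : ℚ := Algebra.norm ℚ (Algebra.discr F₁ ⇑b) with hNδdef
  set ND : ℚ := Algebra.norm ℚ D with hNDdef
  set m := Module.finrank F₁ F with hmdef
  have hcard : Fintype.card ι = m := by rw [hmdef, finrank_eq_card_basis b]
  set n₀ := Module.finrank ℚ F₀ with hn₀def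
  obtain ⟨ib, hib⟩ := CM_aux.discr_quad D d₁ hd₁ hgen hdeg
  set c₀ : Basis (Fin (Module.finrank ℚ F₀)) ℚ F₀ := Module.finBasis ℚ F₀ with hc₀
  have t1 := CM_aux.discr_tower c₀ ib
  have t2 := CM_aux.discr_tower (c₀.smulTower ib) b
  rw [hib] at t1
  have hnorm4D : Algebra.norm ℚ ((4:F₀) * D) = 4 ^ n₀ * ND := by
    rw [_root_.map_mul, show (4:F₀) = algebraMap ℚ F₀ 4 by norm_num, Algebra.norm_algebraMap]
  rw [hnorm4D, show (Fintype.card (Fin 2)) = 2 by simp] at t1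
  set cF := (c₀.smulTower ib).smulTower b with hcF
  set iB := (NumberField.integralBasis F).reindex ((NumberField.integralBasis F).indexEquiv cF)
    with hiBdef
  have hiB : Algebra.discr ℚ ⇑iB = (NumberField.discr F : ℚ) := by
    rw [hiBdef, NumberField.coe_discr, Basis.coe_reindex, Algebra.discr_reindex]
  obtain ⟨t, ht0, ht⟩ := CM_aux.discr_basis_change iB cF
  rw [hiB] at ht
  set s₁ : ℚ := Algebra.discr ℚ ⇑c₀ * 2 ^ n₀ with hs₁def
  have hs₁0 : s₁ ≠ 0 :=
    mul_ne_zero (Algebra.discr_not_zero_of_basis ℚ c₀) (pow_ne_zero _ two_ne_zero)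
  set u : ℚ := s₁ ^ m / t with hudef
  have hu0 : u ≠ 0 := div_ne_zero (pow_ne_zero _ hs₁0) ht0
  have hsign : 0 < (-1 : ℚ) ^ n₀ * ND := CM_aux.norm_sign_of_tr hF₀real hD
  have hND0 : ND ≠ 0 := by
    intro h
    rw [h, mul_zero] at hsign
    exact lt_irrefl 0 hsign
  -- the key rational identity
  have key : (NumberField.discr F : ℚ) = u ^ 2 * (ND ^ m * Nδ) := by
    have e1 : Algebra.discr ℚ ⇑cF =
        (Algebra.discr ℚ ⇑(c₀.smulTower ib)) ^ (Fintype.card ι) * Nδ := t2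
    rw [hcard, t1, ht] at e1
    have h4 : ((Algebra.discr ℚ ⇑c₀) ^ 2 * (4 ^ n₀ * ND)) ^ m * Nδ =
        (s₁ ^ m) ^ 2 * (ND ^ m * Nδ) := by
      rw [hs₁def, show (4:ℚ)^n₀ = ((2:ℚ)^n₀)^2 from by
        rw [show (4:ℚ) = 2^2 by norm_num, ← pow_mul, mul_comm, pow_mul]]
      ring
    rw [h4] at e1
    rw [hudef, div_pow, div_mul_eq_mul_div, eq_div_iff (pow_ne_zero 2 ht0)]
    linear_combination e1
  -- cast to ℝ and take square roots
  have hNδR : (0:ℝ) < (Nδ:ℝ) := by exact_mod_cast hNδpos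
  have habs : |((NumberField.discr F : ℚ) : ℝ)| = (u:ℝ)^2 * (|(ND:ℝ)|^m * (Nδ:ℝ)) := by
    rw [show ((NumberField.discr F : ℚ) : ℝ) = (u:ℝ)^2 * ((ND:ℝ)^m * (Nδ:ℝ)) from by
      exact_mod_cast congrArg (fun q : ℚ => (q : ℝ)) key]
    rw [abs_mul, abs_mul, abs_pow, abs_pow, sq_abs, abs_of_pos hNδR]
  set w : ℚ := |u| with hwdef
  have hw0 : w ≠ 0 := by simpa [hwdef] using hu0
  have hwR : ((w:ℚ) : ℝ) = |(u:ℝ)| := by rw [hwdef]; push_cast; rfl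
  have hsqrt : Real.sqrt |((NumberField.discr F : ℤ) : ℝ)| =
      (w:ℝ) * ((Real.sqrt |(ND:ℝ)|)^m * Real.sqrt (Nδ:ℝ)) := by
    rw [show ((NumberField.discr F : ℤ) : ℝ) = ((NumberField.discr F : ℚ) : ℝ) by push_cast; rfl]
    rw [habs, Real.sqrt_mul (sq_nonneg _), Real.sqrt_mul (pow_nonneg (abs_nonneg _) m),
      Real.sqrt_sq_eq_abs, CM_aux.sqrt_pow (abs_nonneg _), hwR]
  -- finrank arithmetic
  have hfr : Module.finrank ℚ F = n₀ * (2 * m) := by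
    rw [← Module.finrank_mul_finrank ℚ F₀ F, ← Module.finrank_mul_finrank F₀ F₁ F, hdeg]
  have hhalf : Module.finrank ℚ F / 2 = n₀ * m := by
    rw [hfr, show n₀ * (2 * m) = 2 * (n₀ * m) by ring,
      Nat.mul_div_cancel_left _ (by norm_num : 0 < 2)]
  rcases lt_trichotomy ND 0 with hNDneg | hNDzero | hNDpos
  · -- ND < 0, n₀ odd
    have hodd : Odd n₀ := by
      rcases Nat.even_or_odd n₀ with he | ho
      · exfalso
        rw [he.neg_one_pow, one_mul] at hsign
        exact absurd hsign (not_lt.2 hNDneg.le)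
      · exact ho
    obtain ⟨a, ha⟩ := hodd
    have hNDR : ((ND:ℚ):ℝ) < 0 := by exact_mod_cast hNDneg
    refine ⟨w * (-1)^((a+1)*m), mul_ne_zero hw0 (pow_ne_zero _ (by norm_num)), ?_⟩
    rw [show ((ND:ℚ):ℂ) = (((ND:ℝ) : ℝ) : ℂ) from (Complex.ofReal_ratCast ND).symm,
      CM_aux.cpow_half_neg hNDR, hhalf, hsqrt, abs_of_neg (by exact_mod_cast hNDneg), ha]
    have hI2 : Complex.I ^ ((2*a+1)*m) * Complex.I ^ m = (-1:ℂ)^((a+1)*m) := by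
      rw [← pow_add, show (2*a+1)*m + m = 2*((a+1)*m) by ring, pow_mul, Complex.I_sq]
    have hcanc : ((-1:ℂ))^((a+1)*m) * ((-1:ℂ))^((a+1)*m) = 1 := by
      rw [← pow_add, show (a+1)*m + (a+1)*m = 2*((a+1)*m) by ring, pow_mul]
      norm_num
    push_cast
    linear_combination (-(w:ℂ) * ((-1:ℂ))^((a+1)*m) * ((Real.sqrt (-(ND:ℝ)) : ℝ):ℂ)^m *
        ((Real.sqrt (Nδ:ℝ) : ℝ):ℂ)) * hI2 +
      (-(w:ℂ) * ((Real.sqrt (-(ND:ℝ)) : ℝ):ℂ)^m * ((Real.sqrt (Nδ:ℝ) : ℝ):ℂ)) * hcanc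
  · exact absurd hNDzero hND0
  · -- ND > 0, n₀ even
    have heven : Even n₀ := by
      rcases Nat.even_or_odd n₀ with he | ho
      · exact he
      · exfalso
        rw [ho.neg_one_pow] at hsign
        nlinarith
    obtain ⟨a, ha⟩ := heven
    have hNDR : (0:ℝ) < ((ND:ℚ):ℝ) := by exact_mod_cast hNDpos
    refine ⟨w * (-1)^(a*m), mul_ne_zero hw0 (pow_ne_zero _ (by norm_num)), ?_⟩
    rw [show ((ND:ℚ):ℂ) = (((ND:ℝ) : ℝ) : ℂ) from (Complex.ofReal_ratCast ND).symm,
      CM_aux.cpow_half_pos hNDR.le, hhalf, hsqrt, abs_of_pos (by exact_mod_cast hNDpos), ha]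
    have hI1 : Complex.I ^ ((a+a)*m) = (-1:ℂ)^(a*m) := by
      rw [show (a+a)*m = 2*(a*m) by ring, pow_mul, Complex.I_sq]
    have hcanc : ((-1:ℂ))^(a*m) * ((-1:ℂ))^(a*m) = 1 := by
      rw [← pow_add, show a*m + a*m = 2*(a*m) by ring, pow_mul]
      norm_num
    push_cast
    linear_combination (-(w:ℂ) * ((-1:ℂ))^(a*m) * ((Real.sqrt (ND:ℝ) : ℝ):ℂ)^m *
        ((Real.sqrt (Nδ:ℝ) : ℝ):ℂ)) * hI1 +
      (-(w:ℂ) * ((Real.sqrt (ND:ℝ) : ℝ):ℂ)^m * ((Real.sqrt (Nδ:ℝ) : ℝ):ℂ)) * hcanc
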